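/- Let n ≥ 1 be an integer, θ ∈ (0,1), c ≥ 1 an integer, F a finite family of nonempty subsets of {1,…,n}, and π : F → ℝ with π(S) > 0 for all S ∈ F. Let p be a schedule and suppose there exists λ ∈ ℝ such that W_i(p) = λ for every i ∈ {1,…,n}. Then p is a global minimizer of the θ-cost over the standard simplex: cost_θ(p) ≤ cost_θ(q) for every schedule q. -/

import Mathlib

lemma pow_tangent (c : ℕ) (hc : 1 ≤ c) (u v : ℝ) (hu0 : 0 ≤ u) (hv0 : 0 ≤ v) :
    v ^ c + c * v ^ (c - 1) * (u - v) ≤ u ^ c := by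
  rcases eq_or_lt_of_le hv0 with hv | hv
  · rcases Nat.eq_or_lt_of_le hc with hc1 | hc2
    · simp [← hc1, ← hv]
    · have h1 : c - 1 ≠ 0 := by omega
      rw [← hv]
      simp [zero_pow (by omega : c ≠ 0), zero_pow h1]
      positivity
  · have hb := one_add_mul_le_pow (a := u / v - 1)
      (by nlinarith [div_nonneg hu0 hv.le] : (-2:ℝ) ≤ u / v - 1) c
    have hvne : v ≠ 0 := ne_of_gt hv
    have h2 : (1 + (u / v - 1)) ^ c = u ^ c / v ^ c := by
      rw [show (1:ℝ) + (u/v - 1) = u / v by ring, div_pow]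
    rw [h2] at hb
    have hvc : (0:ℝ) < v ^ c := by positivity
    have h3 := (mul_le_mul_iff_of_pos_right hvc).mpr hb
    have h4 : (1 + c * (u / v - 1)) * v ^ c = v ^ c + c * v ^ (c-1) * (u - v) := by
      have hv5 : v ^ c = v ^ (c - 1) * v := by
        rw [← pow_succ]; congr 1; omega
      rw [hv5]; field_simp
    rw [h4] at h3
    calc v ^ c + c * v ^ (c-1) * (u - v) ≤ u ^ c / v ^ c * v ^ c := h3
      _ = u ^ c := by field_simp

lemma kernel_tangent (θ : ℝ) (hθ0 : 0 < θ) (hθ1 : θ < 1) (c : ℕ) (hc : 1 ≤ c)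
    (u v : ℝ) (hu0 : 0 ≤ u) (hu1 : u ≤ 1) (hv0 : 0 ≤ v) (hv1 : v ≤ 1) :
    1 / (1 - θ * v ^ c) + θ * c * v ^ (c - 1) * (u - v) / (1 - θ * v ^ c) ^ 2
      ≤ 1 / (1 - θ * u ^ c) := by
  have hu1c : u ^ c ≤ 1 := pow_le_one₀ hu0 hu1
  have hv1c : v ^ c ≤ 1 := pow_le_one₀ hv0 hv1
  have hA : 0 < 1 - θ * u ^ c := by nlinarith [pow_nonneg hu0 c]
  have hB : 0 < 1 - θ * v ^ c := by nlinarith [pow_nonneg hv0 c]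
  set B := 1 - θ * v ^ c with hBdef
  set t := u ^ c - v ^ c with htdef
  have hAB : 1 - θ * u ^ c = B - θ * t := by rw [hBdef, htdef]; ring
  rw [hAB] at hA ⊢
  have hstep1 : θ * c * v ^ (c - 1) * (u - v) ≤ θ * t := by
    have := pow_tangent c hc u v hu0 hv0
    rw [htdef]; nlinarith
  have key : 1 / (B - θ * t) - (1 / B + θ * t / B ^ 2)
      = θ ^ 2 * t ^ 2 / ((B - θ * t) * B ^ 2) := by
    field_simp
    ring
  have hpos : 0 ≤ θ ^ 2 * t ^ 2 / ((B - θ * t) * B ^ 2) := by positivity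
  have h2 : 1 / B + θ * t / B ^ 2 ≤ 1 / (B - θ * t) := by linarith
  have h3 : θ * c * v ^ (c-1) * (u - v) / B ^ 2 ≤ θ * t / B ^ 2 := by
    gcongr
  linarith

lemma sum_swap_filter (n : ℕ) (F : Finset (Finset (Fin n)))
    (w : Finset (Fin n) → ℝ) (x : Fin n → ℝ) :
    ∑ S ∈ F, w S * ∑ i ∈ S, x i
      = ∑ i : Fin n, x i * ∑ S ∈ F.filter (fun S => i ∈ S), w S := by
  calc ∑ S ∈ F, w S * ∑ i ∈ S, x i
      = ∑ S ∈ F, ∑ i : Fin n, if i ∈ S then w S * x i else 0 := by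
        refine Finset.sum_congr rfl fun S _ => ?_
        rw [Finset.mul_sum, Finset.sum_ite_mem, Finset.univ_inter]
    _ = ∑ i : Fin n, ∑ S ∈ F, if i ∈ S then w S * x i else 0 := Finset.sum_comm
    _ = ∑ i : Fin n, x i * ∑ S ∈ F.filter (fun S => i ∈ S), w S := by
        refine Finset.sum_congr rfl fun i _ => ?_
        rw [Finset.mul_sum, Finset.sum_filter]
        exact Finset.sum_congr rfl fun S _ => by split <;> ring

/-- If `p` is a schedule and there exists `λ ∈ ℝ` with
`W_i(p) = λ` for every `i`, then `p` is a global minimizer of `cost_θ` over the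
standard simplex. -/
theorem stmt10 (n : ℕ) (hn : 1 ≤ n) (θ : ℝ) (hθ : θ ∈ Set.Ioo (0 : ℝ) 1)
    (c : ℕ) (hc : 1 ≤ c) (F : Finset (Finset (Fin n)))
    (hF : ∀ S ∈ F, S.Nonempty)
    (π : Finset (Fin n) → ℝ) (hπ : ∀ S ∈ F, 0 < π S)
    (cost : (Fin n → ℝ) → ℝ)
    (hcost : ∀ p, cost p = ∑ S ∈ F, π S / (1 - θ * (1 - ∑ i ∈ S, p i) ^ c))
    (W : (Fin n → ℝ) → Fin n → ℝ)
    (hW : ∀ p i, W p i = ∑ S ∈ F.filter (fun S => i ∈ S),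
        θ * c * π S * (1 - ∑ j ∈ S, p j) ^ (c - 1)
          / (1 - θ * (1 - ∑ j ∈ S, p j) ^ c) ^ 2)
    (p : Fin n → ℝ) (hp : p ∈ stdSimplex ℝ (Fin n))
    (lam : ℝ) (heq : ∀ i, W p i = lam) :
    ∀ q ∈ stdSimplex ℝ (Fin n), cost p ≤ cost q := by
  intro q hq
  obtain ⟨hp0, hp1⟩ := hp
  obtain ⟨hq0, hq1⟩ := hq
  obtain ⟨hθ0, hθ1⟩ := hθ
  -- weights
  set w : Finset (Fin n) → ℝ := fun S =>
    θ * c * π S * (1 - ∑ j ∈ S, p j) ^ (c - 1)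
      / (1 - θ * (1 - ∑ j ∈ S, p j) ^ c) ^ 2 with hwdef
  -- bounds on partial sums
  have hbound : ∀ (r : Fin n → ℝ), (∀ i, 0 ≤ r i) → (∑ i, r i) = 1 →
      ∀ S : Finset (Fin n), 0 ≤ ∑ i ∈ S, r i ∧ (∑ i ∈ S, r i) ≤ 1 := by
    intro r hr0 hr1 S
    constructor
    · exact Finset.sum_nonneg fun i _ => hr0 i
    · calc ∑ i ∈ S, r i ≤ ∑ i : Fin n, r i :=
          Finset.sum_le_sum_of_subset_of_nonneg (Finset.subset_univ S)
            (fun i _ _ => hr0 i)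
        _ = 1 := hr1
  -- per-set tangent inequality
  have per : ∀ S ∈ F,
      π S / (1 - θ * (1 - ∑ i ∈ S, p i) ^ c)
        + w S * ((∑ i ∈ S, p i) - (∑ i ∈ S, q i))
      ≤ π S / (1 - θ * (1 - ∑ i ∈ S, q i) ^ c) := by
    intro S hS
    obtain ⟨hpS0, hpS1⟩ := hbound p hp0 hp1 S
    obtain ⟨hqS0, hqS1⟩ := hbound q hq0 hq1 S
    have hkt := kernel_tangent θ hθ0 hθ1 c hc
      (1 - ∑ i ∈ S, q i) (1 - ∑ i ∈ S, p i)
      (by linarith) (by linarith) (by linarith) (by linarith)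
    have hπS := (hπ S hS).le
    have h := mul_le_mul_of_nonneg_left hkt hπS
    calc π S / (1 - θ * (1 - ∑ i ∈ S, p i) ^ c)
          + w S * ((∑ i ∈ S, p i) - (∑ i ∈ S, q i))
        = π S * (1 / (1 - θ * (1 - ∑ i ∈ S, p i) ^ c)
            + θ * c * (1 - ∑ i ∈ S, p i) ^ (c - 1)
              * ((1 - ∑ i ∈ S, q i) - (1 - ∑ i ∈ S, p i))
              / (1 - θ * (1 - ∑ i ∈ S, p i) ^ c) ^ 2) := by
          rw [hwdef]; ring
      _ ≤ π S * (1 / (1 - θ * (1 - ∑ i ∈ S, q i) ^ c)) := h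
      _ = π S / (1 - θ * (1 - ∑ i ∈ S, q i) ^ c) := by ring
  -- the linear term vanishes
  have hzero : ∑ S ∈ F, w S * ((∑ i ∈ S, p i) - (∑ i ∈ S, q i)) = 0 := by
    have hrw : ∀ S : Finset (Fin n),
        (∑ i ∈ S, p i) - (∑ i ∈ S, q i) = ∑ i ∈ S, (p i - q i) := by
      intro S; rw [Finset.sum_sub_distrib]
    calc ∑ S ∈ F, w S * ((∑ i ∈ S, p i) - (∑ i ∈ S, q i))
        = ∑ S ∈ F, w S * ∑ i ∈ S, (p i - q i) := by
          exact Finset.sum_congr rfl fun S _ => by rw [hrw]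
      _ = ∑ i : Fin n, (p i - q i) * ∑ S ∈ F.filter (fun S => i ∈ S), w S :=
          sum_swap_filter n F w (fun i => p i - q i)
      _ = ∑ i : Fin n, (p i - q i) * lam := by
          refine Finset.sum_congr rfl fun i _ => ?_
          rw [← heq i, hW p i]
      _ = (∑ i : Fin n, (p i - q i)) * lam := by rw [Finset.sum_mul]
      _ = 0 := by rw [Finset.sum_sub_distrib, hp1, hq1]; ring
  -- conclude
  rw [hcost p, hcost q]
  have hsum := Finset.sum_le_sum per
  rw [Finset.sum_add_distrib, hzero, add_zero] at hsum
  exact hsum
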